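/- arXiv:1705.06319 — 12 statements merged into one kernel-verified Lean document; each statement's English description precedes it below -/
import Mathlib

section
/- For positive integers P and D, and nonnegative reals γ_1,…,γ_P, the ratio (Σ_{i=1}^P γ_i) / (min_{t∈[1,P]} (Σ_{i=1}^{t-1} γ_i + D·γ_t)) is at least 1 - (1 - 1/D)^P, provided the denominator is positive. -/
/-- Wolsey's inequality: for positive integers `P` and `D` and nonnegative reals
`γ 1, …, γ P`, the ratio of `∑ i in [1..P], γ i` to
`min_{t ∈ [1..P]} (∑ i in [1..t-1], γ i + D * γ t)` is at least `1 - (1 - 1/D)^P`,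
provided the denominator (the minimum) is positive. -/
theorem stmt_0 (P D : ℕ) (hP : 0 < P) (hD : 0 < D) (γ : ℕ → ℝ)
    (hγ : ∀ i, 0 ≤ γ i) (hne : (Finset.Icc 1 P).Nonempty)
    (hpos : 0 < (Finset.Icc 1 P).inf' hne
      (fun t => (∑ i ∈ Finset.Icc 1 (t - 1), γ i) + (D : ℝ) * γ t)) :
    (∑ i ∈ Finset.Icc 1 P, γ i) /
      ((Finset.Icc 1 P).inf' hne
        (fun t => (∑ i ∈ Finset.Icc 1 (t - 1), γ i) + (D : ℝ) * γ t))
      ≥ 1 - (1 - 1 / (D : ℝ)) ^ P := by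
  set m := (Finset.Icc 1 P).inf' hne
      (fun t => (∑ i ∈ Finset.Icc 1 (t - 1), γ i) + (D : ℝ) * γ t) with hm
  have hD1 : (1 : ℝ) ≤ (D : ℝ) := by exact_mod_cast hD
  have hDpos : (0 : ℝ) < D := by linarith
  have hq0 : (0 : ℝ) ≤ 1 - 1 / (D : ℝ) := by
    have : 1 / (D : ℝ) ≤ 1 := by
      rw [div_le_one hDpos]; exact hD1
    linarith
  have key : ∀ t ≤ P, m * (1 - (1 - 1 / (D : ℝ)) ^ t) ≤ ∑ i ∈ Finset.Icc 1 t, γ i := by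
    intro t
    induction t with
    | zero => intro _; simp
    | succ t ih =>
      intro ht
      have ih' := ih (le_of_lt (Nat.lt_of_succ_le ht))
      have hmem : t + 1 ∈ Finset.Icc 1 P := Finset.mem_Icc.mpr ⟨Nat.succ_le_succ (Nat.zero_le t), ht⟩
      have hle : m ≤ (∑ i ∈ Finset.Icc 1 (t + 1 - 1), γ i) + (D : ℝ) * γ (t + 1) :=
        Finset.inf'_le _ hmem
      simp only [Nat.add_sub_cancel] at hle
      have hsum : ∑ i ∈ Finset.Icc 1 (t + 1), γ i
          = (∑ i ∈ Finset.Icc 1 t, γ i) + γ (t + 1) := by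
        rw [← Finset.Ico_add_one_right_eq_Icc, Finset.sum_Ico_succ_top (Nat.succ_le_succ (Nat.zero_le t)),
          Nat.succ_eq_add_one, Nat.succ_eq_add_one, zero_add, Finset.Ico_add_one_right_eq_Icc]
      rw [hsum]
      have hγt : (m - ∑ i ∈ Finset.Icc 1 t, γ i) / (D : ℝ) ≤ γ (t + 1) := by
        rw [div_le_iff₀ hDpos]
        nlinarith
      have hmul : m * (1 - (1 - 1 / (D : ℝ)) ^ t) * (1 - 1 / (D : ℝ))
          ≤ (∑ i ∈ Finset.Icc 1 t, γ i) * (1 - 1 / (D : ℝ)) :=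
        mul_le_mul_of_nonneg_right ih' hq0
      have hexp : m * (1 - (1 - 1 / (D : ℝ)) ^ (t + 1))
          = m * (1 - (1 - 1 / (D : ℝ)) ^ t) * (1 - 1 / (D : ℝ)) + m / (D : ℝ) := by
        ring
      rw [hexp]
      have : (∑ i ∈ Finset.Icc 1 t, γ i) * (1 - 1 / (D : ℝ)) + m / (D : ℝ)
          = (∑ i ∈ Finset.Icc 1 t, γ i) + (m - ∑ i ∈ Finset.Icc 1 t, γ i) / (D : ℝ) := by
        field_simp
        ring
      nlinarith
  have := key P le_rfl
  rw [ge_iff_le, le_div_iff₀ hpos]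
  nlinarith
end

section
/- Let M = (U, F) be a matroid and S, T ∈ F two independent sets. Then there exists a function b : T \ S → (S \ T) ∪ {φ} (where φ is a dummy element, deletion of φ being a no-op) such that for every u ∈ T \ S, (S \ {b(u)}) ∪ {u} ∈ F, and every y ∈ S \ T has at most one preimage under b. -/
open Set

/-- If `I` is independent and contained in the closure of an independent set `J`,
then `I` has at most as many elements as `J`. -/
lemma aux_encard_le {α : Type*} {M : Matroid α} {I J : Set α} (hI : M.Indep I)
    (hJ : M.Indep J) (h : I ⊆ M.closure J) : I.encard ≤ J.encard := by
  by_contra hlt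
  push_neg at hlt
  obtain ⟨e, heIJ, hins⟩ := hJ.augment hI hlt
  have hdep : M.Dep (insert e J) := hJ.insert_dep_iff.mpr ⟨h heIJ.1, heIJ.2⟩
  exact hdep.not_indep hins

/-- If `I` is independent and contained in the closure of a set `X ⊆ M.E`,
then `I` has at most as many elements as `X`. -/
lemma aux_encard_le' {α : Type*} {M : Matroid α} {I X : Set α} (hI : M.Indep I)
    (h : I ⊆ M.closure X) (hX : X ⊆ M.E) : I.encard ≤ X.encard := by
  obtain ⟨J, hJ⟩ := M.exists_isBasis X hX
  have h1 : I ⊆ M.closure J := by rwa [hJ.closure_eq_closure]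
  exact (aux_encard_le hI hJ.indep h1).trans (encard_mono hJ.subset)

/-- Existence of a "fundamental circuit": a minimal dependent subset of `insert u S`. -/
lemma aux_circuit {α : Type*} {M : Matroid α} [M.Finite] {S : Set α} {u : α}
    (hS : M.Indep S) (huE : u ∈ M.E) (huS : u ∉ S) (hdep : ¬ M.Indep (insert u S)) :
    ∃ C ⊆ insert u S, u ∈ C ∧ M.Dep C ∧ ∀ y ∈ C, M.Indep (C \ {y}) := by
  have hSE : insert u S ⊆ M.E := insert_subset huE hS.subset_ground
  have hfin : {X | X ⊆ insert u S ∧ M.Dep X}.Finite :=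
    ((M.set_finite _ hSE).finite_subsets).subset (fun X hX => hX.1)
  have hmem : insert u S ∈ {X | X ⊆ insert u S ∧ M.Dep X} := ⟨Subset.rfl, hdep, hSE⟩
  obtain ⟨C, _, hCmin⟩ := hfin.isPWO.exists_le_minimal hmem
  obtain ⟨hCsub, hCdep⟩ := hCmin.prop
  have huC : u ∈ C := by
    by_contra h
    refine hCdep.not_indep (hS.subset (fun x hx => ?_))
    rcases hCsub hx with h' | h'
    · exact absurd (h' ▸ hx) h
    · exact h'
  refine ⟨C, hCsub, huC, hCdep, fun y hy => ?_⟩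
  by_contra hind
  have hdep' : C \ {y} ∈ {X | X ⊆ insert u S ∧ M.Dep X} :=
    ⟨diff_subset.trans hCsub, hind, diff_subset.trans hCdep.subset_ground⟩
  have := hCmin.2 hdep' diff_subset
  exact (this hy).2 rfl

/-- The key lemma: if `insert u S` is dependent then `u` lies in the closure of
`(S ∩ T) ∪ N u`, where `N u` is the set of valid swaps. -/
lemma aux_key {α : Type*} {M : Matroid α} [M.Finite] {S T : Set α} {u : α}
    (hS : M.Indep S) (hT : M.Indep T) (hu : u ∈ T \ S) (hdep : ¬ M.Indep (insert u S)) :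
    u ∈ M.closure ((S ∩ T) ∪ {y | y ∈ S \ T ∧ M.Indep ((S \ {y}) ∪ {u})}) := by
  have huE : u ∈ M.E := hT.subset_ground hu.1
  obtain ⟨C, hCsub, huC, hCdep, hmin⟩ := aux_circuit hS huE hu.2 hdep
  have hCu : C \ {u} ⊆ S := by
    rintro x ⟨hx, hxu⟩
    rcases hCsub hx with h' | h'
    · exact absurd h' hxu
    · exact h'
  have hucl : u ∈ M.closure (C \ {u}) := by
    have h1 : M.Indep (C \ {u}) := hmin u huC
    have h2 : M.Dep (insert u (C \ {u})) := by
      rwa [insert_diff_singleton, insert_eq_self.mpr huC]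
    exact (h1.insert_dep_iff.mp h2).1
  refine M.closure_subset_closure ?_ hucl
  rintro y ⟨hyC, hyu'⟩
  have hyu : y ≠ u := hyu'
  have hyS : y ∈ S := hCu ⟨hyC, hyu'⟩
  by_cases hyT : y ∈ T
  · exact Or.inl ⟨hyS, hyT⟩
  refine Or.inr ⟨⟨hyS, hyT⟩, ?_⟩
  have hset : (S \ {y}) ∪ {u} = (insert u S) \ {y} := by
    rw [union_comm, singleton_union, ← insert_diff_singleton_comm hyu.symm]
  rw [hset]
  set W := (insert u S) \ {y} with hWdef
  have hWE : W ⊆ M.E := diff_subset.trans (insert_subset huE hS.subset_ground)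
  have hCyW : C \ {y} ⊆ W := fun x hx => ⟨hCsub hx.1, hx.2⟩
  have hCyind : M.Indep (C \ {y}) := hmin y hyC
  obtain ⟨I, hIbasis, hCyI⟩ := hCyind.subset_isBasis_of_subset hCyW hWE
  have hycl : y ∈ M.closure I := by
    have h2 : M.Dep (insert y (C \ {y})) := by
      rwa [insert_diff_singleton, insert_eq_self.mpr hyC]
    exact M.closure_subset_closure hCyI (hCyind.insert_dep_iff.mp h2).1
  have hWcl : W ⊆ M.closure I := hIbasis.subset_closure
  have hScl : S ⊆ M.closure I := by
    intro x hx
    by_cases hxy : x = y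
    · exact hxy ▸ hycl
    · exact hWcl ⟨Or.inr hx, hxy⟩
  have hSI : S.encard ≤ I.encard := aux_encard_le hS hIbasis.indep hScl
  have hWenc : W.encard = S.encard := by
    have h1 : W = insert u (S \ {y}) := by
      rw [hWdef, ← insert_diff_singleton_comm hyu.symm]
    have h2 : u ∉ S \ {y} := fun h => hu.2 h.1
    rw [h1, encard_insert_of_notMem h2, encard_diff_singleton_add_one hyS]
  have hWfin : W.Finite := M.set_finite W hWE
  have hIW : I = W :=
    hWfin.eq_of_subset_of_encard_le' hIbasis.subset (hWenc ▸ hSI)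
  rw [← hIW]
  exact hIbasis.indep

/-- Swap-mapping lemma for a single matroid: given independent sets `S, T`,
there is a mapping `b` from `T \ S` to `(S \ T) ∪ {φ}` (the value `none`
playing the role of the dummy element `φ`) such that each swap
`(S \ {b u}) ∪ {u}` is independent and each `y ∈ S \ T` has at most one
preimage. -/
theorem stmt_4 {α : Type*} (M : Matroid α) [M.Finite] (S T : Set α)
    (hS : M.Indep S) (hT : M.Indep T) :
    ∃ b : α → Option α,
      (∀ u ∈ T \ S, ∀ y, b u = some y → y ∈ S \ T) ∧
      (∀ u ∈ T \ S, M.Indep ((S \ ((b u).elim (∅ : Set α) (fun y => {y}))) ∪ {u})) ∧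
      (∀ y ∈ S \ T, ∀ u₁ ∈ T \ S, ∀ u₂ ∈ T \ S,
        b u₁ = some y → b u₂ = some y → u₁ = u₂) := by
  classical
  set N : α → Set α := fun u => {y | y ∈ S \ T ∧ M.Indep ((S \ {y}) ∪ {u})} with hN
  have hSfin : S.Finite := M.set_finite S hS.subset_ground
  have hTfin : T.Finite := M.set_finite T hT.subset_ground
  set D : Set α := {u | u ∈ T \ S ∧ ¬ M.Indep (insert u S)} with hDdef
  have hDfin : D.Finite := hTfin.subset (fun u hu => hu.1.1)
  have hNfin : ∀ u, (N u).Finite := fun u => hSfin.subset (fun y hy => hy.1.1)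
  let Dfin : Finset α := hDfin.toFinset
  let t : {x // x ∈ Dfin} → Finset α := fun u => (hNfin u.1).toFinset
  have hmemD : ∀ x : {x // x ∈ Dfin}, (x : α) ∈ D := fun x => hDfin.mem_toFinset.mp x.2
  have hall : ∀ A : Finset {x // x ∈ Dfin}, A.card ≤ (A.biUnion t).card := by
    intro A
    set Y : Set α := ((A.biUnion t : Finset α) : Set α) with hYdef
    set A' : Set α := Subtype.val '' (A : Set {x // x ∈ Dfin}) with hA'def
    have hA'sub : A' ⊆ T \ S := by
      rintro x ⟨a, _, rfl⟩
      exact (hmemD a).1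
    have hI0indep : M.Indep ((S ∩ T) ∪ A') :=
      hT.subset (union_subset inter_subset_right (fun x hx => (hA'sub hx).1))
    have hYsub : Y ⊆ S \ T := by
      intro y hy
      simp only [hYdef, Finset.coe_biUnion, mem_iUnion, Finset.mem_coe] at hy
      obtain ⟨a, _, ha⟩ := hy
      exact ((hNfin a.1).mem_toFinset.mp ha).1
    have hXE : (S ∩ T) ∪ Y ⊆ M.E :=
      union_subset (inter_subset_left.trans hS.subset_ground)
        (fun y hy => hS.subset_ground (hYsub hy).1)
    have hI0cl : (S ∩ T) ∪ A' ⊆ M.closure ((S ∩ T) ∪ Y) := by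
      apply union_subset
      · exact (subset_union_left).trans (M.subset_closure _ hXE)
      · rintro x ⟨a, haA, rfl⟩
        have hkey := aux_key hS hT (hmemD a).1 (hmemD a).2
        refine M.closure_subset_closure ?_ hkey
        apply union_subset_union_right
        intro y hy
        simp only [hYdef, Finset.coe_biUnion, mem_iUnion, Finset.mem_coe]
        exact ⟨a, by simpa using haA, (hNfin a.1).mem_toFinset.mpr hy⟩
    have hcard : ((S ∩ T) ∪ A').encard ≤ ((S ∩ T) ∪ Y).encard :=
      aux_encard_le' hI0indep hI0cl hXE
    have hdisj : Disjoint (S ∩ T) A' :=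
      disjoint_left.mpr (fun x hx hx' => (hA'sub hx').2 hx.1)
    have hA'enc : A'.encard = (A.card : ℕ∞) := by
      rw [hA'def, Subtype.val_injective.encard_image, encard_coe_eq_coe_finsetCard]
    have hYenc : Y.encard = ((A.biUnion t).card : ℕ∞) := encard_coe_eq_coe_finsetCard _
    have h1 : ((S ∩ T) ∪ A').encard = (S ∩ T).encard + A'.encard :=
      encard_union_eq hdisj
    have h2 : ((S ∩ T) ∪ Y).encard ≤ (S ∩ T).encard + Y.encard := encard_union_le _ _
    have h3 : (S ∩ T).encard + A'.encard ≤ (S ∩ T).encard + Y.encard :=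
      h1 ▸ hcard.trans h2
    have hSTfin : (S ∩ T).encard ≠ ⊤ :=
      (hSfin.subset inter_subset_left).encard_lt_top.ne
    have h4 : A'.encard ≤ Y.encard :=
      (WithTop.add_le_add_iff_left hSTfin).mp h3
    rw [hA'enc, hYenc] at h4
    exact_mod_cast h4
  obtain ⟨f, hfinj, hft⟩ := (Finset.all_card_le_biUnion_card_iff_exists_injective t).mp hall
  refine ⟨fun u => if h : u ∈ Dfin then some (f ⟨u, h⟩) else none, ?_, ?_, ?_⟩
  · intro u _ y hy
    dsimp only at hy
    by_cases h : u ∈ Dfin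
    · rw [dif_pos h] at hy
      have := (hNfin u).mem_toFinset.mp (hft ⟨u, h⟩)
      rw [Option.some_inj] at hy
      exact hy ▸ this.1
    · rw [dif_neg h] at hy
      exact absurd hy (by simp)
  · intro u huTS
    dsimp only
    by_cases h : u ∈ Dfin
    · rw [dif_pos h]
      have := (hNfin u).mem_toFinset.mp (hft ⟨u, h⟩)
      simpa [union_singleton] using this.2
    · rw [dif_neg h]
      have : M.Indep (insert u S) := by
        by_contra hdep
        exact h (hDfin.mem_toFinset.mpr ⟨huTS, hdep⟩)
      simpa [union_singleton] using this
  · intro y _ u₁ _ u₂ _ h₁ h₂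
    dsimp only at h₁ h₂
    by_cases ha : u₁ ∈ Dfin
    · by_cases hb : u₂ ∈ Dfin
      · rw [dif_pos ha, Option.some_inj] at h₁
        rw [dif_pos hb, Option.some_inj] at h₂
        have := hfinj (h₁.trans h₂.symm)
        exact congrArg Subtype.val this
      · rw [dif_neg hb] at h₂; exact absurd h₂ (by simp)
    · rw [dif_neg ha] at h₁; exact absurd h₁ (by simp)
end

section
/- Let f be a nonnegative monotone submodular function on a finite set U, let S* = {u₁,…,u_p} be ordered greedily by marginal value (u₁ maximizes f({u}) over S*, and u₂ maximizes f({u₁,u}) − f({u₁}) over S* \ {u₁}), and set Y = {u₁,u₂}. Then for any ℓ ≥ 3, any W ⊆ U \ {u₁,u₂,u_ℓ}, and any w ∈ W ∪ {φ}: f(((Y ∪ W) \ {w}) ∪ {u_ℓ}) − f(Y ∪ W) ≤ f(Y)/2. -/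
open Finset

/-- Lemma 5 of the paper: if `u₁, u₂` are the two greedily best elements of
`S*` and `Y = {u₁, u₂}`, then for any `uℓ ∈ S* \ Y`, any
`W ⊆ U \ {u₁, u₂, uℓ}` and any `w ∈ W ∪ {φ}` (with `none` playing the role of
`φ`), the marginal gain `f(((Y ∪ W) \ {w}) ∪ {uℓ}) − f(Y ∪ W)` is at most
`f(Y)/2`. -/
theorem stmt_6 {U : Type*} [Fintype U] [DecidableEq U] (f : Finset U → ℝ)
    (hnonneg : ∀ A, 0 ≤ f A)
    (hmono : ∀ A B : Finset U, A ⊆ B → f A ≤ f B)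
    (hsub : ∀ A B : Finset U, f A + f B ≥ f (A ∪ B) + f (A ∩ B))
    (Sstar : Finset U) (u₁ u₂ uℓ : U)
    (hu₁S : u₁ ∈ Sstar) (hu₂S : u₂ ∈ Sstar) (huℓS : uℓ ∈ Sstar)
    (h12 : u₁ ≠ u₂) (hℓ1 : uℓ ≠ u₁) (hℓ2 : uℓ ≠ u₂)
    (hu₁ : ∀ u ∈ Sstar, f {u} ≤ f {u₁})
    (hu₂ : ∀ u ∈ Sstar.erase u₁, f {u₁, u} - f {u₁} ≤ f {u₁, u₂} - f {u₁})
    (W : Finset U) (hW : u₁ ∉ W ∧ u₂ ∉ W ∧ uℓ ∉ W)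
    (w : Option U) (hw : ∀ y, w = some y → y ∈ W) :
    f (insert uℓ (w.elim (({u₁, u₂} : Finset U) ∪ W)
        (fun y => (({u₁, u₂} : Finset U) ∪ W).erase y)))
      - f (({u₁, u₂} : Finset U) ∪ W) ≤ f {u₁, u₂} / 2 := by
  obtain ⟨h1W, h2W, hℓW⟩ := hW
  set Y : Finset U := {u₁, u₂} with hY
  -- key: marginal gain on superset of Y not containing uℓ
  have key : ∀ C : Finset U, Y ⊆ C → uℓ ∉ C →
      f (insert uℓ C) - f C ≤ f (insert uℓ Y) - f Y := by
    intro C hYC hℓC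
    have h := hsub (insert uℓ Y) C
    have hun : insert uℓ Y ∪ C = insert uℓ C := by
      ext x; simp only [mem_union, mem_insert]
      constructor
      · rintro (⟨rfl | hx⟩ | hx)
        · exact Or.inl rfl
        · exact Or.inr (hYC hx)
        · exact Or.inr hx
      · rintro (rfl | hx)
        · exact Or.inl (Or.inl rfl)
        · exact Or.inr hx
    have hin : insert uℓ Y ∩ C = Y := by
      ext x; simp only [mem_inter, mem_insert]
      constructor
      · rintro ⟨rfl | hx, hxC⟩
        · exact absurd hxC hℓC
        · exact hx
      · intro hx; exact ⟨Or.inr hx, hYC hx⟩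
    rw [hun, hin] at h
    linarith
  -- bound f (insert uℓ Y) - f Y ≤ f Y / 2
  have h1 := hsub {u₁, uℓ} Y
  have hun1 : ({u₁, uℓ} : Finset U) ∪ Y = insert uℓ Y := by
    ext x; simp only [hY, mem_union, mem_insert, mem_singleton]; tauto
  have hin1 : ({u₁, uℓ} : Finset U) ∩ Y = {u₁} := by
    ext x; simp only [hY, mem_inter, mem_insert, mem_singleton]
    constructor
    · rintro ⟨rfl | rfl, h⟩
      · rfl
      · rcases h with rfl | rfl
        · exact absurd rfl hℓ1
        · exact absurd rfl hℓ2
    · rintro rfl; exact ⟨Or.inl rfl, Or.inl rfl⟩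
  rw [hun1, hin1] at h1
  have h2 := hu₂ uℓ (mem_erase.mpr ⟨hℓ1, huℓS⟩)
  have h3 := hu₁ u₂ hu₂S
  have h4 := hsub {u₁} {u₂}
  have hun2 : ({u₁} : Finset U) ∪ {u₂} = Y := rfl
  have hin2 : ({u₁} : Finset U) ∩ {u₂} = ∅ := by
    ext x; simp only [mem_inter, mem_singleton, notMem_empty, iff_false]
    rintro ⟨rfl, rfl⟩; exact h12 rfl
  rw [hun2, hin2] at h4
  have h5 := hnonneg (∅ : Finset U)
  have hbound : f (insert uℓ Y) - f Y ≤ f Y / 2 := by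
    have : f {u₁, u₂} = f Y := rfl
    linarith
  -- now case on w
  cases w with
  | none =>
    simp only [Option.elim]
    have hℓC : uℓ ∉ Y ∪ W := by
      simp only [hY, mem_union, mem_insert, mem_singleton]
      push_neg; exact ⟨⟨hℓ1, hℓ2⟩, hℓW⟩
    have := key (Y ∪ W) subset_union_left hℓC
    linarith
  | some y =>
    simp only [Option.elim]
    have hyW : y ∈ W := hw y rfl
    have hYC : Y ⊆ (Y ∪ W).erase y := by
      intro x hx
      refine mem_erase.mpr ⟨?_, mem_union_left _ hx⟩
      rintro rfl
      rcases mem_insert.mp hx with rfl | hx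
      · exact h1W hyW
      · rw [mem_singleton] at hx; subst hx; exact h2W hyW
    have hℓC : uℓ ∉ (Y ∪ W).erase y := by
      intro h
      rcases mem_union.mp (mem_of_mem_erase h) with h | h
      · rcases mem_insert.mp h with rfl | h
        · exact hℓ1 rfl
        · rw [mem_singleton] at h; exact hℓ2 h
      · exact hℓW h
    have hk := key _ hYC hℓC
    have hm := hmono _ _ (erase_subset y (Y ∪ W))
    linarith
end

section
/- Let f be a nonnegative monotone submodular function on finite U, and let u₁, u₂ ∈ U satisfy f({u₁}) ≥ f({u}) for all u in a set S* containing u₁, u₂, and f({u₁,u₂}) − f({u₁}) ≥ f({u₁,u}) − f({u₁}) for all u ∈ S* \ {u₁}. Then f(S*) ≤ (|S*|/2) · f({u₁,u₂}), for |S*| ≥ 2. -/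
open Finset

lemma marg_bound {U : Type*} [DecidableEq U] (f : Finset U → ℝ)
    (hmono : ∀ A B : Finset U, A ⊆ B → f A ≤ f B)
    (hsub : ∀ A B : Finset U, f A + f B ≥ f (A ∪ B) + f (A ∩ B)) (A : Finset U) :
    ∀ S : Finset U, f (A ∪ S) ≤ f A + ∑ u ∈ S, (f (insert u A) - f A) := by
  intro S
  induction S using Finset.induction_on with
  | empty => simp
  | @insert x S hx ih =>
    have h1 := hsub (A ∪ S) (insert x A)
    have h2 : f A ≤ f ((A ∪ S) ∩ insert x A) := by
      apply hmono
      exact subset_inter subset_union_left (subset_insert _ _)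
    have h3 : A ∪ insert x S = (A ∪ S) ∪ insert x A := by
      ext y; simp [or_comm, or_assoc, or_left_comm]
    rw [Finset.sum_insert hx]
    rw [h3]
    linarith

/-- If `u₁, u₂` are the two greedily best elements of `S*`, then
`f(S*) ≤ (|S*|/2) · f({u₁, u₂})`. -/
theorem stmt_7 {U : Type*} [Fintype U] [DecidableEq U] (f : Finset U → ℝ)
    (hnonneg : ∀ A, 0 ≤ f A)
    (hmono : ∀ A B : Finset U, A ⊆ B → f A ≤ f B)
    (hsub : ∀ A B : Finset U, f A + f B ≥ f (A ∪ B) + f (A ∩ B))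
    (Sstar : Finset U) (hcard : 2 ≤ Sstar.card)
    (u₁ u₂ : U) (hu₁S : u₁ ∈ Sstar) (hu₂S : u₂ ∈ Sstar) (h12 : u₁ ≠ u₂)
    (hu₁ : ∀ u ∈ Sstar, f {u} ≤ f {u₁})
    (hu₂ : ∀ u ∈ Sstar.erase u₁, f {u₁, u} - f {u₁} ≤ f {u₁, u₂} - f {u₁}) :
    f Sstar ≤ ((Sstar.card : ℝ) / 2) * f {u₁, u₂} := by
  have hUnion : ({u₁} : Finset U) ∪ Sstar.erase u₁ = Sstar := by
    ext y; by_cases hy : y = u₁ <;> simp [hy, hu₁S]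
  have key := marg_bound f hmono hsub {u₁} (Sstar.erase u₁)
  rw [hUnion] at key
  have hsumb : ∑ u ∈ Sstar.erase u₁, (f (insert u {u₁}) - f {u₁}) ≤
      (Sstar.erase u₁).card • (f {u₁, u₂} - f {u₁}) := by
    apply Finset.sum_le_card_nsmul
    intro u hu
    have := hu₂ u hu
    have : f (insert u {u₁}) = f {u₁, u} := by
      congr 1; ext y; simp [or_comm]
    rw [this]
    exact hu₂ u hu
  have hcard' : (Sstar.erase u₁).card = Sstar.card - 1 := Finset.card_erase_of_mem hu₁S
  have hk : (1:ℕ) ≤ Sstar.card := le_trans (by norm_num) hcard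
  have hcardR : ((Sstar.erase u₁).card : ℝ) = (Sstar.card : ℝ) - 1 := by
    rw [hcard']; push_cast [hk]; ring
  -- Y ≤ 2 f{u₁}
  have hY2 : f {u₁, u₂} ≤ 2 * f {u₁} := by
    have h := hsub {u₁} {u₂}
    have hi : ({u₁} : Finset U) ∩ {u₂} = ∅ :=
      Finset.singleton_inter_of_notMem (by simp [h12])
    have hu : ({u₁} : Finset U) ∪ {u₂} = {u₁, u₂} := rfl
    rw [hi, hu] at h
    have := hnonneg (∅ : Finset U)
    have := hu₁ u₂ hu₂S
    linarith
  have hfu₁Y : f {u₁} ≤ f {u₁, u₂} := hmono _ _ (by intro y; simp; tauto)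
  have hk2 : (2:ℝ) ≤ (Sstar.card : ℝ) := by exact_mod_cast hcard
  rw [nsmul_eq_mul, hcardR] at hsumb
  nlinarith [hnonneg {u₁}]
end

section
/- Let f be a monotone submodular function with f(∅) ≥ 0 on finite U, let S = {u₁,…,u_m} ⊆ U, and let y₁,…,y_K be K distinct elements of S. Then Σ_{i=1}^K (f(S) − f(S \ {y_i})) ≤ f(S). -/
open Finset

lemma aux_8 {U : Type*} [Fintype U] [DecidableEq U] (f : Finset U → ℝ)
    (hsub : ∀ A B : Finset U, f A + f B ≥ f (A ∪ B) + f (A ∩ B))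
    (S : Finset U) (Y : Finset U) :
    Y ⊆ S → ∑ y ∈ Y, (f S - f (S.erase y)) ≤ f S - f (S \ Y) := by
  induction Y using Finset.induction_on with
  | empty => simp
  | insert _ _ ha ih =>
    rename_i a Y'
    intro hY
    have haS : a ∈ S := hY (mem_insert_self a Y')
    have hY' : Y' ⊆ S := (subset_insert a Y').trans hY
    rw [Finset.sum_insert ha]
    have key : f S - f (S.erase a) ≤ f (S \ Y') - f (S \ insert a Y') := by
      have h := hsub (S.erase a) (S \ Y')
      have hu : S.erase a ∪ (S \ Y') = S := by
        apply Finset.Subset.antisymm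
        · exact Finset.union_subset (erase_subset a S) (sdiff_subset)
        · intro x hx
          by_cases hxa : x = a
          · exact mem_union_right _ (mem_sdiff.mpr ⟨hx, by simp [hxa, ha]⟩)
          · exact mem_union_left _ (mem_erase.mpr ⟨hxa, hx⟩)
      have hi : S.erase a ∩ (S \ Y') = S \ insert a Y' := by
        ext x; simp [mem_erase, mem_sdiff, mem_insert]; tauto
      rw [hu, hi] at h
      linarith
    have := ih hY'
    linarith

/-- Local-search inequality: for distinct elements `y ∈ Y ⊆ S`, the sum of the
marginal losses `f S − f (S \ {y})` is at most `f S`. -/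
theorem stmt_8 {U : Type*} [Fintype U] [DecidableEq U] (f : Finset U → ℝ)
    (hmono : ∀ A B : Finset U, A ⊆ B → f A ≤ f B)
    (hsub : ∀ A B : Finset U, f A + f B ≥ f (A ∪ B) + f (A ∩ B))
    (hempty : 0 ≤ f ∅)
    (S Y : Finset U) (hY : Y ⊆ S) :
    ∑ y ∈ Y, (f S - f (S.erase y)) ≤ f S := by
  have h := aux_8 f hsub S Y hY
  have h0 : 0 ≤ f (S \ Y) := hempty.trans (hmono _ _ (empty_subset _))
  linarith
end

section
/- Let f be a monotone submodular function with f(∅) ≥ 0 on finite U, S ⊆ U a finite set, and let b₁,…,b_m be subsets of S such that each element of S belongs to at most k of the b_i. Then Σ_{i=1}^m (f(S) − f(S \ b_i)) ≤ k · f(S). -/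
open Finset

/-- `k`-swap local-search inequality: if `b₁, …, b_m ⊆ S` and each element of
`S` belongs to at most `k` of the `b i`, then
`∑ i, (f S − f (S \ b i)) ≤ k · f S`. -/
theorem stmt_9 {U : Type*} [Fintype U] [DecidableEq U] (f : Finset U → ℝ)
    (hmono : ∀ A B : Finset U, A ⊆ B → f A ≤ f B)
    (hsub : ∀ A B : Finset U, f A + f B ≥ f (A ∪ B) + f (A ∩ B))
    (hempty : 0 ≤ f ∅)
    (k m : ℕ) (hk : 1 ≤ k) (S : Finset U) (b : Fin m → Finset U)
    (hb : ∀ i, b i ⊆ S)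
    (hcount : ∀ u ∈ S, (Finset.univ.filter (fun i => u ∈ b i)).card ≤ k) :
    ∑ i, (f S - f (S \ b i)) ≤ (k : ℝ) * f S := by
  letI : LinearOrder U := LinearOrder.lift' (Fintype.equivFin U) (Equiv.injective _)
  set P : U → Finset U := fun u => S.filter (· < u) with hPdef
  set g : U → ℝ := fun u => f (insert u (P u)) - f (P u) with hgdef
  -- diminishing returns
  have dim : ∀ (Q A : Finset U) (u : U), Q ⊆ A → u ∉ A →
      f (insert u A) - f A ≤ f (insert u Q) - f Q := by
    intro Q A u hQA hu
    have h := hsub (insert u Q) A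
    have h1 : insert u Q ∪ A = insert u A := by
      rw [Finset.insert_union, Finset.union_eq_right.mpr hQA]
    have h2 : insert u Q ∩ A = Q := by
      ext v
      simp only [Finset.mem_inter, Finset.mem_insert]
      constructor
      · rintro ⟨(rfl | hv), hvA⟩
        · exact absurd hvA hu
        · exact hv
      · intro hv; exact ⟨Or.inr hv, hQA hv⟩
    rw [h1, h2] at h
    linarith
  have gnonneg : ∀ u, 0 ≤ g u := fun u =>
    sub_nonneg.mpr (hmono _ _ (Finset.subset_insert _ _))
  -- telescoping sum
  have tele : ∀ T : Finset U,
      ∑ u ∈ T, (f (insert u (T.filter (· < u))) - f (T.filter (· < u))) = f T - f ∅ := by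
    intro T
    induction T using Finset.induction_on_max with
    | empty => simp
    | insert a s hmax ih =>
      have ha : a ∉ s := fun h => lt_irrefl a (hmax a h)
      have hfa : (insert a s).filter (· < a) = s := by
        ext v
        simp only [Finset.mem_filter, Finset.mem_insert]
        constructor
        · rintro ⟨(rfl | hv), hlt⟩
          · exact absurd hlt (lt_irrefl v)
          · exact hv
        · intro hv; exact ⟨Or.inr hv, hmax v hv⟩
      have hfu : ∀ u ∈ s, (insert a s).filter (· < u) = s.filter (· < u) := by
        intro u hu
        ext v
        simp only [Finset.mem_filter, Finset.mem_insert]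
        constructor
        · rintro ⟨(rfl | hv), hlt⟩
          · exact absurd (hlt.trans (hmax u hu)) (lt_irrefl v)
          · exact ⟨hv, hlt⟩
        · rintro ⟨hv, hlt⟩; exact ⟨Or.inr hv, hlt⟩
      rw [Finset.sum_insert ha, hfa]
      have : ∑ u ∈ s, (f (insert u ((insert a s).filter (· < u)))
          - f ((insert a s).filter (· < u)))
          = ∑ u ∈ s, (f (insert u (s.filter (· < u))) - f (s.filter (· < u))) :=
        Finset.sum_congr rfl fun u hu => by rw [hfu u hu]
      rw [this, ih]
      ring
  -- key per-set bound
  have key : ∀ t : Finset U, t ⊆ S → f S - f (S \ t) ≤ ∑ u ∈ t, g u := by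
    intro t
    induction t using Finset.induction_on_min with
    | empty => simp
    | insert a s hmin ih =>
      intro hts
      have ha : a ∉ s := fun h => lt_irrefl a (hmin a h)
      have haS : a ∈ S := hts (Finset.mem_insert_self a s)
      have hsS : s ⊆ S := fun x hx => hts (Finset.mem_insert_of_mem hx)
      have hA : insert a (S \ insert a s) = S \ s := by
        ext v
        simp only [Finset.mem_insert, Finset.mem_sdiff]
        constructor
        · rintro (rfl | ⟨hvS, hv⟩)
          · exact ⟨haS, ha⟩
          · exact ⟨hvS, fun h => hv (Or.inr h)⟩
        · rintro ⟨hvS, hv⟩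
          by_cases h : v = a
          · exact Or.inl h
          · exact Or.inr ⟨hvS, by simp [h, hv]⟩
      have haA : a ∉ S \ insert a s := by simp
      have hPA : P a ⊆ S \ insert a s := by
        intro v hv
        simp only [hPdef, Finset.mem_filter] at hv
        simp only [Finset.mem_sdiff, Finset.mem_insert]
        refine ⟨hv.1, ?_⟩
        rintro (rfl | hvs)
        · exact absurd hv.2 (lt_irrefl v)
        · exact absurd hv.2 (asymm (hmin v hvs))
      have step1 : f (S \ s) - f (S \ insert a s) ≤ g a := by
        have := dim (P a) (S \ insert a s) a hPA haA
        rw [hA] at this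
        exact this
      have step2 := ih hsS
      rw [Finset.sum_insert ha]
      linarith
  -- counting swap
  have swap : ∑ i, ∑ u ∈ b i, g u
      = ∑ u ∈ S, ((Finset.univ.filter (fun i => u ∈ b i)).card : ℝ) * g u := by
    have h1 : ∀ i : Fin m, ∑ u ∈ b i, g u = ∑ u ∈ S, if u ∈ b i then g u else 0 := by
      intro i
      rw [Finset.sum_ite_mem, Finset.inter_eq_right.mpr (hb i)]
    have h2 : ∑ i, ∑ u ∈ b i, g u = ∑ u ∈ S, ∑ i, if u ∈ b i then g u else 0 := by
      simp_rw [h1]; exact Finset.sum_comm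
    rw [h2]
    refine Finset.sum_congr rfl fun u _ => ?_
    rw [Finset.sum_ite, Finset.sum_const, Finset.sum_const_zero, add_zero, nsmul_eq_mul]
  have hsum : ∑ u ∈ S, g u = f S - f ∅ := tele S
  calc ∑ i, (f S - f (S \ b i)) ≤ ∑ i, ∑ u ∈ b i, g u :=
      Finset.sum_le_sum fun i _ => key (b i) (hb i)
    _ = ∑ u ∈ S, ((Finset.univ.filter (fun i => u ∈ b i)).card : ℝ) * g u := swap
    _ ≤ ∑ u ∈ S, (k : ℝ) * g u :=
      Finset.sum_le_sum fun u hu =>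
        mul_le_mul_of_nonneg_right (by exact_mod_cast hcount u hu) (gnonneg u)
    _ = (k : ℝ) * ∑ u ∈ S, g u := by rw [Finset.mul_sum]
    _ ≤ (k : ℝ) * f S := by
        rw [hsum]
        have hk0 : (0:ℝ) ≤ (k:ℝ) := Nat.cast_nonneg k
        nlinarith
end

section
/- Let f be a monotone submodular function on finite U, S* and S two subsets, and b : S* \ S → (S \ S*) ∪ {φ} a mapping with |b⁻¹(y)| ≤ 1 for all y ∈ S \ S*. Suppose that for every x ∈ S* \ S, f((S \ {b(x)}) ∪ {x}) ≤ f(S). Then f(S*) ≤ 2·f(S), assuming f(∅) ≥ 0. -/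
open Finset

private lemma aux_union_bound {U : Type*} [DecidableEq U] (f : Finset U → ℝ)
    (hmono : ∀ A B : Finset U, A ⊆ B → f A ≤ f B)
    (hsub : ∀ A B : Finset U, f A + f B ≥ f (A ∪ B) + f (A ∩ B))
    (S : Finset U) (T : Finset U) :
    f (S ∪ T) ≤ f S + ∑ x ∈ T \ S, (f (insert x S) - f S) := by
  classical
  induction T using Finset.induction_on with
  | empty => simp
  | @insert a T ha IH =>
    by_cases haS : a ∈ S
    · have h1 : S ∪ insert a T = S ∪ T := by
        ext z; simp only [mem_union, mem_insert]; constructor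
        · rintro (h | rfl | h) <;> simp [*]
        · tauto
      have h2 : insert a T \ S = T \ S := by
        ext z; simp only [mem_sdiff, mem_insert]
        constructor
        · rintro ⟨rfl | h, h2⟩ <;> [exact absurd haS h2; exact ⟨h, h2⟩]
        · tauto
      rw [h1, h2]; exact IH
    · have h2 : insert a T \ S = insert a (T \ S) := by
        ext z; simp only [mem_sdiff, mem_insert]
        constructor
        · rintro ⟨rfl | hz, h2⟩
          · exact Or.inl rfl
          · exact Or.inr ⟨hz, h2⟩
        · rintro (rfl | ⟨h1, h2⟩)
          · exact ⟨Or.inl rfl, haS⟩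
          · exact ⟨Or.inr h1, h2⟩
      have hnot : a ∉ T \ S := by simp [ha]
      rw [h2, Finset.sum_insert hnot]
      have hs := hsub (insert a S) (S ∪ T)
      have hu : insert a S ∪ (S ∪ T) = S ∪ insert a T := by
        ext z; simp only [mem_union, mem_insert]; tauto
      have hi : insert a S ∩ (S ∪ T) = S := by
        ext z; simp only [mem_inter, mem_union, mem_insert]
        constructor
        · rintro ⟨rfl | h, h2 | h2⟩ <;> first | assumption | (exfalso; tauto)
        · tauto
      rw [hu, hi] at hs
      linarith
private lemma aux_erase_bound {U : Type*} [DecidableEq U] (f : Finset U → ℝ)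
    (hsub : ∀ A B : Finset U, f A + f B ≥ f (A ∪ B) + f (A ∩ B))
    (S : Finset U) (T : Finset U) (hT : T ⊆ S) :
    ∑ y ∈ T, (f S - f (S.erase y)) ≤ f S - f (S \ T) := by
  classical
  induction T using Finset.induction_on with
  | empty => simp
  | @insert a T ha IH =>
    have haS : a ∈ S := hT (mem_insert_self a T)
    have hTS : T ⊆ S := fun x hx => hT (mem_insert_of_mem hx)
    rw [Finset.sum_insert ha]
    have hs := hsub (S.erase a) (S \ T)
    have hu : S.erase a ∪ (S \ T) = S := by
      ext z; simp only [mem_union, mem_erase, mem_sdiff]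
      constructor
      · tauto
      · intro hz; by_cases hza : z = a
        · subst hza; right; exact ⟨hz, ha⟩
        · left; exact ⟨hza, hz⟩
    have hi : S.erase a ∩ (S \ T) = S \ insert a T := by
      ext z; simp only [mem_inter, mem_erase, mem_sdiff, mem_insert]; tauto
    rw [hu, hi] at hs
    have := IH hTS
    linarith

/-- Case 1 of the single-matroid analysis: if `b` maps `S* \ S` injectively into
`(S \ S*) ∪ {φ}` (with `none` as `φ`) and no swap improves `f`, then
`f(S*) ≤ 2 · f(S)`. -/
theorem stmt_10 {U : Type*} [Fintype U] [DecidableEq U] (f : Finset U → ℝ)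
    (hmono : ∀ A B : Finset U, A ⊆ B → f A ≤ f B)
    (hsub : ∀ A B : Finset U, f A + f B ≥ f (A ∪ B) + f (A ∩ B))
    (hempty : 0 ≤ f ∅)
    (Sstar S : Finset U) (b : U → Option U)
    (himg : ∀ x ∈ Sstar \ S, ∀ y, b x = some y → y ∈ S \ Sstar)
    (hinj : ∀ y ∈ S \ Sstar, ∀ x₁ ∈ Sstar \ S, ∀ x₂ ∈ Sstar \ S,
      b x₁ = some y → b x₂ = some y → x₁ = x₂)
    (hswap : ∀ x ∈ Sstar \ S,
      f (insert x ((b x).elim S (fun y => S.erase y))) ≤ f S) :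
    f Sstar ≤ 2 * f S := by
  classical
  set h : U → ℝ := fun x => (b x).elim 0 (fun y => f S - f (S.erase y)) with hh
  -- step 1: each marginal gain bounded by h
  have key : ∀ x ∈ Sstar \ S, f (insert x S) - f S ≤ h x := by
    intro x hx
    have hxS : x ∉ S := (mem_sdiff.mp hx).2
    cases hb : b x with
    | none =>
      have := hswap x hx
      rw [hb] at this
      simp only [hh, hb, Option.elim]
      simpa using sub_nonpos.mpr this
    | some y =>
      have hy := himg x hx y hb
      have hyS : y ∈ S := (mem_sdiff.mp hy).1
      have hsw := hswap x hx
      rw [hb] at hsw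
      simp only [Option.elim] at hsw
      have hs := hsub S (insert x (S.erase y))
      have hu : S ∪ insert x (S.erase y) = insert x S := by
        ext z; simp only [mem_union, mem_insert, mem_erase]
        constructor
        · tauto
        · rintro (rfl | hz)
          · right; left; rfl
          · left; exact hz
      have hi : S ∩ insert x (S.erase y) = S.erase y := by
        ext z; simp only [mem_inter, mem_insert, mem_erase]
        constructor
        · rintro ⟨hz, rfl | hz2⟩
          · exact absurd hz hxS
          · exact hz2
        · intro hz; exact ⟨hz.2, Or.inr hz⟩
      rw [hu, hi] at hs
      simp only [hh, hb, Option.elim]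
      linarith
  -- step 2: sum of h over Sstar \ S bounded by erase-sum over S \ Sstar
  have step2 : ∑ x ∈ Sstar \ S, h x ≤ ∑ y ∈ S \ Sstar, (f S - f (S.erase y)) := by
    set T₁ := (Sstar \ S).filter (fun x => (b x).isSome) with hT₁
    have hsplit : ∑ x ∈ Sstar \ S, h x = ∑ x ∈ T₁, h x := by
      rw [← Finset.sum_filter_add_sum_filter_not (Sstar \ S) (fun x => (b x).isSome) h]
      have : ∑ x ∈ (Sstar \ S).filter (fun x => ¬ (b x).isSome), h x = 0 := by
        apply Finset.sum_eq_zero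
        intro x hx
        rw [mem_filter] at hx
        have : b x = none := Option.not_isSome_iff_eq_none.mp hx.2
        simp [hh, this]
      rw [this, add_zero]
    rw [hsplit]
    set e : U → U := fun x => (b x).getD x with he
    have hbx : ∀ x ∈ T₁, b x = some (e x) := by
      intro x hx
      rw [hT₁, mem_filter] at hx
      obtain ⟨y, hy⟩ := Option.isSome_iff_exists.mp hx.2
      simp [he, hy]
    have hinjOn : ∀ x₁ ∈ T₁, ∀ x₂ ∈ T₁, e x₁ = e x₂ → x₁ = x₂ := by
      intro x₁ h1 x₂ h2 heq
      have hb1 := hbx x₁ h1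
      have hb2 := hbx x₂ h2
      have hx1 : x₁ ∈ Sstar \ S := (mem_filter.mp h1).1
      have hx2 : x₂ ∈ Sstar \ S := (mem_filter.mp h2).1
      have hy1 := himg x₁ hx1 (e x₁) hb1
      exact hinj (e x₁) hy1 x₁ hx1 x₂ hx2 hb1 (heq ▸ hb2)
    have himage : ∑ x ∈ T₁, h x = ∑ y ∈ T₁.image e, (f S - f (S.erase y)) := by
      rw [Finset.sum_image hinjOn]
      apply Finset.sum_congr rfl
      intro x hx
      rw [hh]
      simp [hbx x hx]
    rw [himage]
    apply Finset.sum_le_sum_of_subset_of_nonneg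
    · intro y hy
      obtain ⟨x, hx, rfl⟩ := Finset.mem_image.mp hy
      exact himg x (mem_filter.mp hx).1 (e x) (hbx x hx)
    · intro y hy _
      have : S.erase y ⊆ S := erase_subset y S
      linarith [hmono _ _ this]
  -- step 3: erase-sum bound
  have step3 := aux_erase_bound f hsub S (S \ Sstar) (sdiff_subset)
  have hSdiff : S \ (S \ Sstar) = S ∩ Sstar := by
    ext z; simp only [mem_sdiff, mem_inter]; tauto
  rw [hSdiff] at step3
  have hcap : 0 ≤ f (S ∩ Sstar) := le_trans hempty (hmono _ _ (empty_subset _))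
  -- step 0: union bound
  have step0 := aux_union_bound f hmono hsub S Sstar
  have hmarg : ∑ x ∈ Sstar \ S, (f (insert x S) - f S) ≤ ∑ x ∈ Sstar \ S, h x :=
    Finset.sum_le_sum key
  have hfinal : f Sstar ≤ f (S ∪ Sstar) := hmono _ _ (subset_union_right)
  linarith
end

section
/- Let f be a monotone submodular function on finite U with f(∅) ≥ 0, S*, S ⊆ U, and b : S* \ S → {subsets of S \ S* of size ≤ k} a mapping such that each element of S \ S* appears in at most k of the sets b(x). Suppose for every x ∈ S* \ S that f((S \ b(x)) ∪ {x}) ≤ f(S). Then f(S*) ≤ (k+1)·f(S). -/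
open Finset

private lemma marg_aux {U : Type*} [DecidableEq U] (f : Finset U → ℝ)
    (hsub : ∀ A B : Finset U, f A + f B ≥ f (A ∪ B) + f (A ∩ B))
    {A B : Finset U} {x : U} (hAB : A ⊆ B) (hx : x ∉ B) :
    f (insert x B) + f A ≤ f (insert x A) + f B := by
  have h := hsub (insert x A) B
  have h1 : insert x A ∪ B = insert x B := by
    rw [insert_union, union_eq_right.mpr hAB]
  have h2 : insert x A ∩ B = A := by
    ext y
    simp only [mem_inter, mem_insert]
    constructor
    · rintro ⟨(rfl | hy), hyB⟩
      · exact absurd hyB hx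
      · exact hy
    · intro hy; exact ⟨Or.inr hy, hAB hy⟩
  rw [h1, h2] at h
  linarith

private lemma lemA {U : Type*} [DecidableEq U] (f : Finset U → ℝ)
    (hmono : ∀ A B : Finset U, A ⊆ B → f A ≤ f B)
    (hsub : ∀ A B : Finset U, f A + f B ≥ f (A ∪ B) + f (A ∩ B))
    (S : Finset U) (A : Finset U) :
    f (S ∪ A) ≤ f S + ∑ x ∈ A, (f (insert x S) - f S) := by
  induction A using Finset.induction_on with
  | empty => simp
  | @insert a A ha ih =>
    rw [sum_insert ha]
    by_cases haS : a ∈ S ∪ A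
    · have hSA : S ∪ insert a A = S ∪ A := by
        rw [union_insert, insert_eq_self.mpr haS]
      rw [hSA]
      have h0 : f S ≤ f (insert a S) := hmono _ _ (subset_insert _ _)
      linarith
    · have hSA : S ∪ insert a A = insert a (S ∪ A) := by rw [union_insert]
      rw [hSA]
      have := marg_aux f hsub (subset_union_left : S ⊆ S ∪ A) haS
      linarith

private lemma lemC {U : Type*} [DecidableEq U] (f : Finset U → ℝ)
    (hmono : ∀ A B : Finset U, A ⊆ B → f A ≤ f B)
    (hsub : ∀ A B : Finset U, f A + f B ≥ f (A ∪ B) + f (A ∩ B))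
    (S I : Finset U) (k : ℕ) :
    ∀ T : Finset U, T ⊆ S → ∀ c : U → Finset U, (∀ x ∈ I, c x ⊆ T) →
      (∀ u ∈ T, (I.filter (fun x => u ∈ c x)).card ≤ k) →
      ∑ x ∈ I, (f S - f (S \ c x)) ≤ (k : ℝ) * (f S - f (S \ T)) := by
  intro T
  induction T using Finset.induction_on with
  | empty =>
    intro _ c hc _
    have hz : ∀ x ∈ I, f S - f (S \ c x) = 0 := by
      intro x hx
      have : c x = ∅ := subset_empty.mp (hc x hx)
      simp [this]
    rw [Finset.sum_congr rfl hz]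
    simp
  | @insert u T' hu ih =>
    intro hTS c hc hcount
    have huS : u ∈ S := hTS (mem_insert_self u T')
    have hT'S : T' ⊆ S := (subset_insert u T').trans hTS
    set d : ℝ := f (S \ T') - f (S \ insert u T') with hd
    have hd0 : 0 ≤ d := by
      have hss : S \ insert u T' ⊆ S \ T' :=
        sdiff_subset_sdiff (le_refl _) (subset_insert _ _)
      have := hmono _ _ hss
      simp only [hd]; linarith
    have key : ∀ x ∈ I,
        f S - f (S \ c x) ≤ (f S - f (S \ (c x \ {u}))) + (if u ∈ c x then d else 0) := by
      intro x hx
      by_cases hucx : u ∈ c x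
      · simp only [hucx, if_true]
        have hsub1 : S \ insert u T' ⊆ S \ c x :=
          sdiff_subset_sdiff (le_refl _) (hc x hx)
        have hnot : u ∉ S \ c x := by simp [hucx]
        have hmarg := marg_aux f hsub hsub1 hnot
        have e1 : insert u (S \ c x) = S \ (c x \ {u}) := by
          ext y
          simp only [mem_insert, mem_sdiff, mem_singleton]
          constructor
          · rintro (rfl | ⟨hyS, hyc⟩)
            · exact ⟨huS, fun h => (h.2 rfl).elim⟩
            · exact ⟨hyS, fun h => hyc h.1⟩
          · rintro ⟨hyS, h⟩
            by_cases hyu : y = u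
            · exact Or.inl hyu
            · exact Or.inr ⟨hyS, fun hyc => h ⟨hyc, hyu⟩⟩
        have e2 : insert u (S \ insert u T') = S \ T' := by
          ext y
          simp only [mem_insert, mem_sdiff]
          constructor
          · rintro (rfl | ⟨hyS, hy⟩)
            · exact ⟨huS, hu⟩
            · exact ⟨hyS, fun h => hy (Or.inr h)⟩
          · rintro ⟨hyS, hyT'⟩
            by_cases hyu : y = u
            · exact Or.inl hyu
            · refine Or.inr ⟨hyS, fun h => ?_⟩
              rcases h with h' | h'
              · exact hyu h'
              · exact hyT' h'
        rw [e1, e2] at hmarg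
        simp only [hd]
        linarith
      · have hcc : c x \ {u} = c x := by
          apply sdiff_eq_self_of_disjoint
          simp [hucx]
        simp [hucx, hcc]
    calc ∑ x ∈ I, (f S - f (S \ c x))
        ≤ ∑ x ∈ I, ((f S - f (S \ (c x \ {u}))) + (if u ∈ c x then d else 0)) :=
          sum_le_sum key
      _ = (∑ x ∈ I, (f S - f (S \ (c x \ {u})))) + ∑ x ∈ I, (if u ∈ c x then d else 0) := by
          rw [sum_add_distrib]
      _ ≤ (k : ℝ) * (f S - f (S \ T')) + (k : ℝ) * d := by
          apply add_le_add
          · apply ih hT'S (fun x => c x \ {u})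
            · intro x hx
              intro y hy
              simp only [mem_sdiff, mem_singleton] at hy
              rcases mem_insert.mp (hc x hx hy.1) with h' | h'
              · exact absurd h' hy.2
              · exact h'
            · intro v hv
              calc (I.filter (fun x => v ∈ c x \ {u})).card
                  ≤ (I.filter (fun x => v ∈ c x)).card := by
                    apply card_le_card
                    apply monotone_filter_right
                    intro x _ hx
                    exact (mem_sdiff.mp hx).1
                _ ≤ k := hcount v (mem_insert_of_mem hv)
          · rw [← Finset.sum_filter, Finset.sum_const, nsmul_eq_mul]
            apply mul_le_mul_of_nonneg_right _ hd0
            exact_mod_cast hcount u (mem_insert_self u T')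
      _ = (k : ℝ) * (f S - f (S \ insert u T')) := by simp only [hd]; ring

/-- Case 1 of the `k`-matroid analysis: if `b` maps each `x ∈ S* \ S` to a
subset of `S \ S*` of size at most `k`, each element of `S \ S*` appears in at
most `k` of the sets `b x`, and no `k`-swap improves `f`, then
`f(S*) ≤ (k+1) · f(S)`. -/
theorem stmt_11 {U : Type*} [Fintype U] [DecidableEq U] (f : Finset U → ℝ)
    (hmono : ∀ A B : Finset U, A ⊆ B → f A ≤ f B)
    (hsub : ∀ A B : Finset U, f A + f B ≥ f (A ∪ B) + f (A ∩ B))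
    (hempty : 0 ≤ f ∅)
    (k : ℕ) (hk : 1 ≤ k)
    (Sstar S : Finset U) (b : U → Finset U)
    (himg : ∀ x ∈ Sstar \ S, b x ⊆ S \ Sstar ∧ (b x).card ≤ k)
    (hcount : ∀ u ∈ S \ Sstar, ((Sstar \ S).filter (fun x => u ∈ b x)).card ≤ k)
    (hswap : ∀ x ∈ Sstar \ S, f (insert x (S \ b x)) ≤ f S) :
    f Sstar ≤ ((k : ℝ) + 1) * f S := by
  have h1 : f Sstar ≤ f (S ∪ Sstar) := hmono _ _ subset_union_right
  have h2 : S ∪ (Sstar \ S) = S ∪ Sstar := union_sdiff_self_eq_union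
  have h3 := lemA f hmono hsub S (Sstar \ S)
  rw [h2] at h3
  have h4 : ∀ x ∈ Sstar \ S, f (insert x S) - f S ≤ f S - f (S \ b x) := by
    intro x hx
    have hxS : x ∉ S := (mem_sdiff.mp hx).2
    have hmarg := marg_aux f hsub (sdiff_subset : S \ b x ⊆ S) hxS
    have := hswap x hx
    linarith
  have h5 : ∑ x ∈ Sstar \ S, (f (insert x S) - f S) ≤
      ∑ x ∈ Sstar \ S, (f S - f (S \ b x)) := sum_le_sum h4
  have h6 := lemC f hmono hsub S (Sstar \ S) k (S \ Sstar) sdiff_subset b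
    (fun x hx => (himg x hx).1) hcount
  have h7 : S \ (S \ Sstar) = S ∩ Sstar := sdiff_sdiff_self_left S Sstar
  rw [h7] at h6
  have h8 : 0 ≤ f (S ∩ Sstar) := le_trans hempty (hmono _ _ (empty_subset _))
  have h9 : (k : ℝ) * (f S - f (S ∩ Sstar)) ≤ (k : ℝ) * f S := by
    apply mul_le_mul_of_nonneg_left _ (by positivity)
    linarith
  have : f Sstar ≤ f S + (k : ℝ) * f S := by linarith
  linarith
end

section
/- Let g be a monotone submodular function on finite U with g(∅) = 0, and let S*, S_t ⊆ U. Let b : S* \ S_t → (S_t \ S*) ∪ {φ} be injective on the preimage of S_t \ S*. Then g(S*) − g(S_t) ≤ Σ_{x ∈ S* \ S_t} [ (g(S_t) − g(S_t \ {b(x)})) + (g((S_t \ {b(x)}) ∪ {x}) − g(S_t)) ]. -/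
open Finset

lemma sum_marginals {U : Type*} [DecidableEq U] (g : Finset U → ℝ)
    (hsub : ∀ A B : Finset U, g A + g B ≥ g (A ∪ B) + g (A ∩ B)) :
    ∀ (T S : Finset U), Disjoint T S →
      g (S ∪ T) - g S ≤ ∑ x ∈ T, (g (insert x S) - g S) := by
  intro T
  induction T using Finset.induction_on with
  | empty => intro S _; simp
  | insert _ _ ha =>
    rename_i a T' ih
    intro S hd
    have haS : a ∉ S := by
      have := Finset.disjoint_left.mp hd (Finset.mem_insert_self a T'); exact this
    have hd' : Disjoint T' S := (Finset.disjoint_insert_left.mp hd).2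
    rw [Finset.sum_insert ha]
    have key : g (S ∪ insert a T') - g (S ∪ T') ≤ g (insert a S) - g S := by
      have h := hsub (insert a S) (S ∪ T')
      have hu : insert a S ∪ (S ∪ T') = S ∪ insert a T' := by
        ext y; simp [or_comm, or_left_comm]
      have hi : insert a S ∩ (S ∪ T') = S := by
        ext y
        simp only [Finset.mem_inter, Finset.mem_insert, Finset.mem_union]
        constructor
        · rintro ⟨h1 | h1, h2 | h2⟩ <;> first | assumption | (subst h1; exact absurd h2 ha)
        · intro h; exact ⟨Or.inr h, Or.inl h⟩
      rw [hu, hi] at h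
      linarith
    have := ih S hd'
    linarith

/-- Inequality (3): for monotone submodular `g` with `g(∅) = 0` and an
injective-type mapping `b : S* \ S_t → (S_t \ S*) ∪ {φ}` (with `none` as `φ`),
`g(S*) − g(S_t)` is at most the sum over `x ∈ S* \ S_t` of the removal loss
plus the swap gain. -/
theorem stmt_12 {U : Type*} [Fintype U] [DecidableEq U] (g : Finset U → ℝ)
    (hmono : ∀ A B : Finset U, A ⊆ B → g A ≤ g B)
    (hsub : ∀ A B : Finset U, g A + g B ≥ g (A ∪ B) + g (A ∩ B))
    (hempty : g ∅ = 0)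
    (Sstar St : Finset U) (b : U → Option U)
    (himg : ∀ x ∈ Sstar \ St, ∀ y, b x = some y → y ∈ St \ Sstar)
    (hinj : ∀ y ∈ St \ Sstar, ∀ x₁ ∈ Sstar \ St, ∀ x₂ ∈ Sstar \ St,
      b x₁ = some y → b x₂ = some y → x₁ = x₂) :
    g Sstar - g St ≤
      ∑ x ∈ Sstar \ St,
        ((g St - g ((b x).elim St (fun y => St.erase y))) +
          (g (insert x ((b x).elim St (fun y => St.erase y))) - g St)) := by
  have hd : Disjoint (Sstar \ St) St := Finset.sdiff_disjoint
  have h1 : g Sstar - g St ≤ g (St ∪ (Sstar \ St)) - g St := by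
    have : Sstar ⊆ St ∪ (Sstar \ St) := by
      intro y hy
      by_cases h : y ∈ St
      · exact Finset.mem_union_left _ h
      · exact Finset.mem_union_right _ (Finset.mem_sdiff.mpr ⟨hy, h⟩)
    linarith [hmono _ _ this]
  have h2 := sum_marginals g hsub (Sstar \ St) St hd
  refine le_trans (le_trans h1 h2) (Finset.sum_le_sum ?_)
  intro x hx
  have hxSt : x ∉ St := (Finset.mem_sdiff.mp hx).2
  cases hb : b x with
  | none => simp
  | some y =>
    have hy : y ∈ St := (Finset.mem_sdiff.mp (himg x hx y hb)).1
    simp only [Option.elim]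
    have h := hsub (insert x (St.erase y)) St
    have hu : insert x (St.erase y) ∪ St = insert x St := by
      ext z
      simp only [Finset.mem_union, Finset.mem_insert, Finset.mem_erase]
      constructor
      · rintro (h1 | h1)
        · rcases h1 with h1 | ⟨_, h1⟩
          · exact Or.inl h1
          · exact Or.inr h1
        · exact Or.inr h1
      · rintro (h1 | h1)
        · exact Or.inl (Or.inl h1)
        · exact Or.inr h1
    have hi : insert x (St.erase y) ∩ St = St.erase y := by
      ext z
      simp only [Finset.mem_inter, Finset.mem_insert, Finset.mem_erase]
      constructor
      · rintro ⟨h1 | h1, h2⟩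
        · subst h1; exact absurd h2 hxSt
        · exact h1
      · intro h; exact ⟨Or.inr h, h.2⟩
    rw [hu, hi] at h
    linarith
end

section
/- Let g be a monotone submodular function with g(∅) = 0 on finite U. Suppose S*, S_t ⊆ U, each element x has a cost c_x ≥ 0 with Σ_{x ∈ S* \ S_t} c_x ≤ C for some C > 0, there is an injective-type mapping b : S* \ S_t → (S_t \ S*) ∪ {φ} (at most one preimage per real element), and for each x ∈ S* \ S_t, g((S_t \ {b(x)}) ∪ {x}) − g(S_t) ≤ c_x · ρ for some ρ ≥ 0. Then g(S*) ≤ 2·g(S_t) + C·ρ. -/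
open Finset

/-- Inequality (4) of the single-matroid greedy-swap analysis:
if every swap `(x, b x)` has marginal gain at most `c x · ρ` and
`∑_{x ∈ S* \ S_t} c x ≤ C`, then `g(S*) ≤ 2·g(S_t) + C·ρ`. -/
theorem stmt_13 {U : Type*} [Fintype U] [DecidableEq U] (g : Finset U → ℝ)
    (hmono : ∀ A B : Finset U, A ⊆ B → g A ≤ g B)
    (hsub : ∀ A B : Finset U, g A + g B ≥ g (A ∪ B) + g (A ∩ B))
    (hempty : g ∅ = 0)
    (Sstar St : Finset U) (c : U → ℝ) (hc : ∀ u, 0 ≤ c u)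
    (C : ℝ) (hC : 0 < C) (hsum : ∑ x ∈ Sstar \ St, c x ≤ C)
    (ρ : ℝ) (hρ : 0 ≤ ρ)
    (b : U → Option U)
    (himg : ∀ x ∈ Sstar \ St, ∀ y, b x = some y → y ∈ St \ Sstar)
    (hinj : ∀ y ∈ St \ Sstar, ∀ x₁ ∈ Sstar \ St, ∀ x₂ ∈ Sstar \ St,
      b x₁ = some y → b x₂ = some y → x₁ = x₂)
    (hswap : ∀ x ∈ Sstar \ St,
      g (insert x ((b x).elim St (fun y => St.erase y))) - g St ≤ c x * ρ) :
    g Sstar ≤ 2 * g St + C * ρ := by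
  -- decreasing marginals
  have marg : ∀ (A B : Finset U) (x : U), A ⊆ B →
      g (insert x B) - g B ≤ g (insert x A) - g A := by
    intro A B x hAB
    by_cases hx : x ∈ B
    · have h1 : insert x B = B := insert_eq_self.2 hx
      have h2 : g A ≤ g (insert x A) := hmono _ _ (subset_insert _ _)
      rw [h1]; linarith
    · have h := hsub (insert x A) B
      have h1 : insert x A ∪ B = insert x B := by
        rw [insert_union, union_eq_right.2 hAB]
      have h2 : insert x A ∩ B = A := by
        ext z; simp only [mem_inter, mem_insert]
        constructor
        · rintro ⟨(rfl | hz), hzB⟩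
          · exact absurd hzB hx
          · exact hz
        · intro hz; exact ⟨Or.inr hz, hAB hz⟩
      rw [h1, h2] at h; linarith
  have summarg : ∀ (S T : Finset U),
      g (T ∪ S) ≤ g T + ∑ x ∈ S, (g (insert x T) - g T) := by
    intro S
    induction S using Finset.induction with
    | empty => intro T; simp
    | @insert a S' ha ih =>
      intro T
      rw [Finset.sum_insert ha]
      have h1 : T ∪ insert a S' = insert a (T ∪ S') := by
        rw [Finset.union_insert]
      have h2 := marg T (T ∪ S') a subset_union_left
      have h3 := ih T
      have h4 : g (T ∪ S') ≤ g (insert a (T ∪ S')) := hmono _ _ (subset_insert _ _)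
      rw [h1]; linarith
  have L3 : ∀ T : Finset U, T ⊆ St →
      ∑ y ∈ T, (g St - g (St.erase y)) ≤ g St - g (St \ T) := by
    intro T
    induction T using Finset.induction with
    | empty => simp
    | @insert y T' ha ih =>
      intro hsub'
      have hy : y ∈ St := hsub' (mem_insert_self _ _)
      have hT' : T' ⊆ St := (subset_insert _ _).trans hsub'
      have hyT' : y ∈ St \ T' := mem_sdiff.2 ⟨hy, ha⟩
      rw [Finset.sum_insert ha]
      have key : g St - g (St.erase y) ≤ g (St \ T') - g (St \ insert y T') := by
        have hsd : St \ insert y T' = (St \ T').erase y := by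
          ext z
          simp only [mem_sdiff, mem_erase, mem_insert]
          tauto
        have hAB : (St \ T').erase y ⊆ St.erase y :=
          erase_subset_erase _ sdiff_subset
        have h := marg ((St \ T').erase y) (St.erase y) y hAB
        rw [insert_erase hy] at h
        have : insert y ((St \ T').erase y) = St \ T' := by
          rw [insert_erase hyT']
        rw [this] at h
        rw [hsd]; linarith
      have := ih hT'
      linarith
  -- main chain
  have step1 : g Sstar ≤ g (St ∪ (Sstar \ St)) := by
    apply hmono
    intro z hz
    by_cases h : z ∈ St
    · exact mem_union_left _ h
    · exact mem_union_right _ (mem_sdiff.2 ⟨hz, h⟩)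
  have step2 := summarg (Sstar \ St) St
  have per : ∀ x ∈ Sstar \ St,
      g (insert x St) - g St ≤ c x * ρ + (g St - g ((b x).elim St (fun y => St.erase y))) := by
    intro x hx
    have hsubset : ((b x).elim St (fun y => St.erase y)) ⊆ St := by
      cases hb : b x with
      | none => simp
      | some y => simpa using erase_subset y St
    have h := marg _ St x hsubset
    have h2 := hswap x hx
    linarith
  have sum1 : ∑ x ∈ Sstar \ St, (g (insert x St) - g St)
      ≤ ∑ x ∈ Sstar \ St, (c x * ρ + (g St - g ((b x).elim St (fun y => St.erase y)))) :=
    Finset.sum_le_sum per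
  rw [Finset.sum_add_distrib] at sum1
  have sumc : ∑ x ∈ Sstar \ St, c x * ρ ≤ C * ρ := by
    rw [← Finset.sum_mul]
    exact mul_le_mul_of_nonneg_right hsum hρ
  set D := (Sstar \ St).filter (fun x => (b x).isSome) with hD
  have sumsplit : ∑ x ∈ Sstar \ St, (g St - g ((b x).elim St (fun y => St.erase y)))
      = ∑ x ∈ D, (g St - g ((b x).elim St (fun y => St.erase y))) := by
    rw [← Finset.sum_filter_add_sum_filter_not (Sstar \ St) (fun x => (b x).isSome)]
    have hz : ∑ x ∈ (Sstar \ St).filter (fun x => ¬ (b x).isSome),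
        (g St - g ((b x).elim St (fun y => St.erase y))) = 0 := by
      apply Finset.sum_eq_zero
      intro x hx
      rw [mem_filter] at hx
      have : b x = none := Option.not_isSome_iff_eq_none.1 hx.2
      simp [this]
    rw [hz, add_zero]
  have sumD : ∑ x ∈ D, (g St - g ((b x).elim St (fun y => St.erase y)))
      = ∑ y ∈ D.image (fun x => (b x).getD x), (g St - g (St.erase y)) := by
    rw [Finset.sum_image ?_]
    · apply Finset.sum_congr rfl
      intro x hx
      rw [hD, mem_filter] at hx
      obtain ⟨y, hy⟩ := Option.isSome_iff_exists.1 hx.2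
      simp [hy]
    · intro x₁ h1 x₂ h2 heq
      rw [hD, mem_coe, mem_filter] at h1 h2
      obtain ⟨y₁, hy₁⟩ := Option.isSome_iff_exists.1 h1.2
      obtain ⟨y₂, hy₂⟩ := Option.isSome_iff_exists.1 h2.2
      beta_reduce at heq
      rw [hy₁, hy₂] at heq
      simp only [Option.getD_some] at heq
      subst heq
      exact hinj y₁ (himg x₁ h1.1 y₁ hy₁) x₁ h1.1 x₂ h2.1 hy₁ hy₂
  have himgsub : D.image (fun x => (b x).getD x) ⊆ St := by
    intro y hy
    rw [mem_image] at hy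
    obtain ⟨x, hx, rfl⟩ := hy
    rw [hD, mem_filter] at hx
    obtain ⟨z, hz⟩ := Option.isSome_iff_exists.1 hx.2
    have := himg x hx.1 z hz
    rw [hz]
    simpa using (mem_sdiff.1 this).1
  have hL3 := L3 _ himgsub
  have hnonneg : 0 ≤ g (St \ D.image (fun x => (b x).getD x)) := by
    rw [← hempty]; exact hmono _ _ (empty_subset _)
  linarith
end

section
/- Let g be a monotone submodular function with g(∅) = 0 on finite U, and k ≥ 1. Suppose S*, S_t ⊆ U, costs c_x ≥ 0 with Σ_{x ∈ S* \ S_t} c_x ≤ C, a mapping b : S* \ S_t → {subsets of S_t \ S* of size ≤ k} with each element of S_t \ S* in at most k images, and for each x ∈ S* \ S_t, g((S_t \ b(x)) ∪ {x}) − g(S_t) ≤ c_x · ρ for some ρ ≥ 0. Then g(S*) ≤ (k+1)·g(S_t) + C·ρ. -/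
open Finset

section
variable {U : Type*} [DecidableEq U] (g : Finset U → ℝ)

lemma marg_mono (hmono : ∀ A B : Finset U, A ⊆ B → g A ≤ g B)
    (hsub : ∀ A B : Finset U, g A + g B ≥ g (A ∪ B) + g (A ∩ B))
    {A B : Finset U} (hAB : A ⊆ B) (x : U) :
    g (insert x B) - g B ≤ g (insert x A) - g A := by
  by_cases hx : x ∈ B
  · rw [insert_eq_self.2 hx]
    linarith [hmono A (insert x A) (subset_insert x A)]
  · have h := hsub (insert x A) B
    have h1 : insert x A ∪ B = insert x B := by
      rw [insert_union, union_eq_right.2 hAB]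
    have h2 : insert x A ∩ B = A := by
      ext u
      simp only [mem_inter, mem_insert]
      constructor
      · rintro ⟨h' | h', hu⟩
        · exact absurd (h' ▸ hu) hx
        · exact h'
      · intro hu; exact ⟨Or.inr hu, hAB hu⟩
    rw [h1, h2] at h
    linarith

variable [LinearOrder U]

lemma telescope_g (hempty : g ∅ = 0) :
    ∀ S : Finset U, ∑ u ∈ S, (g (S.filter (· ≤ u)) - g (S.filter (· < u))) = g S := by
  intro S
  induction S using Finset.strongInduction with
  | _ S ih =>
    rcases S.eq_empty_or_nonempty with rfl | hS
    · simp [hempty]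
    · set m := S.max' hS with hm
      have hmS : m ∈ S := S.max'_mem hS
      have hfle : S.filter (· ≤ m) = S := by
        apply filter_true_of_mem
        intro u hu; exact S.le_max' u hu
      have hflt : S.filter (· < m) = S.erase m := by
        ext u
        simp only [mem_filter, mem_erase]
        constructor
        · rintro ⟨hu, hlt⟩; exact ⟨ne_of_lt hlt, hu⟩
        · rintro ⟨hne, hu⟩; exact ⟨hu, lt_of_le_of_ne (S.le_max' u hu) hne⟩
      have key : ∀ u ∈ S.erase m,
          (g (S.filter (· ≤ u)) - g (S.filter (· < u)))
          = g ((S.erase m).filter (· ≤ u)) - g ((S.erase m).filter (· < u)) := by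
        intro u hu
        have hum : u < m := lt_of_le_of_ne (S.le_max' u (mem_of_mem_erase hu))
          (ne_of_mem_erase hu)
        have e1 : (S.erase m).filter (· ≤ u) = S.filter (· ≤ u) := by
          ext v; simp only [mem_filter, mem_erase]
          constructor
          · rintro ⟨⟨_, hv⟩, hle⟩; exact ⟨hv, hle⟩
          · rintro ⟨hv, hle⟩
            exact ⟨⟨fun h => absurd (h ▸ hle) (not_le.2 hum), hv⟩, hle⟩
        have e2 : (S.erase m).filter (· < u) = S.filter (· < u) := by
          ext v; simp only [mem_filter, mem_erase]
          constructor
          · rintro ⟨⟨_, hv⟩, hle⟩; exact ⟨hv, hle⟩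
          · rintro ⟨hv, hle⟩
            exact ⟨⟨fun h => absurd (h ▸ hle) (not_lt.2 (le_of_lt hum)), hv⟩, hle⟩
        rw [e1, e2]
      rw [← Finset.add_sum_erase S _ hmS, hfle, hflt,
        Finset.sum_congr rfl key, ih (S.erase m) (erase_ssubset hmS)]
      ring

lemma remove_bound (hmono : ∀ A B : Finset U, A ⊆ B → g A ≤ g B)
    (hsub : ∀ A B : Finset U, g A + g B ≥ g (A ∪ B) + g (A ∩ B)) :
    ∀ T S : Finset U, T ⊆ S →
      g S - g (S \ T) ≤ ∑ u ∈ T, (g (S.filter (· ≤ u)) - g (S.filter (· < u))) := by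
  intro T
  induction T using Finset.strongInduction with
  | _ T ih =>
    intro S hTS
    rcases T.eq_empty_or_nonempty with rfl | hT
    · simp
    · set m := T.max' hT with hm
      have hmT : m ∈ T := T.max'_mem hT
      have hmS : m ∈ S := hTS hmT
      set T' := T.erase m with hT'
      have hsd : S \ T = (S.erase m) \ T' := by
        ext u
        simp only [mem_sdiff, mem_erase, hT']
        constructor
        · rintro ⟨hu, hnu⟩
          exact ⟨⟨fun h => hnu (h ▸ hmT), hu⟩, fun h => hnu h.2⟩
        · rintro ⟨⟨hne, hu⟩, hnu⟩
          refine ⟨hu, fun h => hnu ⟨hne, h⟩⟩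
      -- first step: g S - g (S.erase m) ≤ δ_S m
      have step1 : g S - g (S.erase m)
          ≤ g (S.filter (· ≤ m)) - g (S.filter (· < m)) := by
        have hsubset : S.filter (· < m) ⊆ S.erase m := by
          intro v hv
          simp only [mem_filter] at hv
          exact mem_erase.2 ⟨ne_of_lt hv.2, hv.1⟩
        have h := marg_mono g hmono hsub hsubset m
        have e1 : insert m (S.erase m) = S := insert_erase hmS
        have e2 : insert m (S.filter (· < m)) = S.filter (· ≤ m) := by
          ext v
          simp only [mem_insert, mem_filter]
          constructor
          · rintro (rfl | ⟨hv, hlt⟩)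
            · exact ⟨hmS, le_refl _⟩
            · exact ⟨hv, le_of_lt hlt⟩
          · rintro ⟨hv, hle⟩
            rcases lt_or_eq_of_le hle with h' | h'
            · exact Or.inr ⟨hv, h'⟩
            · exact Or.inl h'
        rw [e1, e2] at h
        exact h
      -- inductive step on S.erase m with T'
      have hT'sub : T' ⊆ S.erase m := by
        intro v hv
        exact mem_erase.2 ⟨ne_of_mem_erase hv, hTS (mem_of_mem_erase hv)⟩
      have step2 := ih T' (erase_ssubset hmT) (S.erase m) hT'sub
      have key : ∀ u ∈ T',
          g ((S.erase m).filter (· ≤ u)) - g ((S.erase m).filter (· < u))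
          = g (S.filter (· ≤ u)) - g (S.filter (· < u)) := by
        intro u hu
        have hum : u < m := lt_of_le_of_ne (T.le_max' u (mem_of_mem_erase hu))
          (ne_of_mem_erase hu)
        have e1 : (S.erase m).filter (· ≤ u) = S.filter (· ≤ u) := by
          ext v; simp only [mem_filter, mem_erase]
          constructor
          · rintro ⟨⟨_, hv⟩, hle⟩; exact ⟨hv, hle⟩
          · rintro ⟨hv, hle⟩
            exact ⟨⟨fun h => absurd (h ▸ hle) (not_le.2 hum), hv⟩, hle⟩
        have e2 : (S.erase m).filter (· < u) = S.filter (· < u) := by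
          ext v; simp only [mem_filter, mem_erase]
          constructor
          · rintro ⟨⟨_, hv⟩, hle⟩; exact ⟨hv, hle⟩
          · rintro ⟨hv, hle⟩
            exact ⟨⟨fun h => absurd (h ▸ hle) (not_lt.2 (le_of_lt hum)), hv⟩, hle⟩
        rw [e1, e2]
      rw [Finset.sum_congr rfl key] at step2
      rw [← Finset.add_sum_erase T _ hmT, hsd]
      linarith

end

section
variable {U : Type*} [DecidableEq U] (g : Finset U → ℝ)

lemma marg_subadd (hmono : ∀ A B : Finset U, A ⊆ B → g A ≤ g B)
    (hsub : ∀ A B : Finset U, g A + g B ≥ g (A ∪ B) + g (A ∩ B))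
    (T A : Finset U) :
    g (A ∪ T) - g A ≤ ∑ x ∈ T, (g (insert x A) - g A) := by
  induction T using Finset.induction with
  | empty => simp
  | @insert y T₀ hy ih =>
    rw [Finset.sum_insert hy]
    have e : A ∪ insert y T₀ = insert y (A ∪ T₀) := by
      rw [union_insert]
    have h := marg_mono g hmono hsub (subset_union_left (s₁ := A) (s₂ := T₀)) y
    rw [e]
    linarith

end

/-- Inequality (11), the `k`-matroid greedy-swap bound:
if every `k`-swap `(x, b x)` has marginal gain at most `c x · ρ` and
`∑_{x ∈ S* \ S_t} c x ≤ C`, then `g(S*) ≤ (k+1)·g(S_t) + C·ρ`. -/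
theorem stmt_14 {U : Type*} [Fintype U] [DecidableEq U] (g : Finset U → ℝ)
    (hmono : ∀ A B : Finset U, A ⊆ B → g A ≤ g B)
    (hsub : ∀ A B : Finset U, g A + g B ≥ g (A ∪ B) + g (A ∩ B))
    (hempty : g ∅ = 0)
    (k : ℕ) (hk : 1 ≤ k)
    (Sstar St : Finset U) (c : U → ℝ) (hc : ∀ u, 0 ≤ c u)
    (C : ℝ) (hC : 0 < C) (hsum : ∑ x ∈ Sstar \ St, c x ≤ C)
    (ρ : ℝ) (hρ : 0 ≤ ρ)
    (b : U → Finset U)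
    (himg : ∀ x ∈ Sstar \ St, b x ⊆ St \ Sstar ∧ (b x).card ≤ k)
    (hcount : ∀ u ∈ St \ Sstar, ((Sstar \ St).filter (fun x => u ∈ b x)).card ≤ k)
    (hswap : ∀ x ∈ Sstar \ St, g (insert x (St \ b x)) - g St ≤ c x * ρ) :
    g Sstar ≤ ((k : ℝ) + 1) * g St + C * ρ := by
  letI : LinearOrder U := LinearOrder.lift' (Fintype.equivFin U) (Fintype.equivFin U).injective
  set D := Sstar \ St with hD
  set W := St \ Sstar with hW
  set δ : U → ℝ := fun u => g (St.filter (· ≤ u)) - g (St.filter (· < u)) with hδ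
  have hδ0 : ∀ u, 0 ≤ δ u := by
    intro u
    have hss : St.filter (· < u) ⊆ St.filter (· ≤ u) := by
      intro v hv
      simp only [mem_filter] at hv ⊢
      exact ⟨hv.1, le_of_lt hv.2⟩
    have := hmono _ _ hss
    simp only [hδ]
    linarith
  -- Step 1: g Sstar ≤ g (St ∪ D)
  have h1 : g Sstar ≤ g (St ∪ D) := by
    apply hmono
    intro v hv
    by_cases h : v ∈ St
    · exact mem_union_left _ h
    · exact mem_union_right _ (mem_sdiff.2 ⟨hv, h⟩)
  -- Step 2: subadditivity of marginals
  have h2 : g (St ∪ D) - g St ≤ ∑ x ∈ D, (g (insert x St) - g St) :=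
    marg_subadd g hmono hsub D St
  -- Step 3: per-element swap bound
  have h3 : ∀ x ∈ D, g (insert x St) - g St ≤ c x * ρ + (g St - g (St \ b x)) := by
    intro x hx
    have h := marg_mono g hmono hsub (sdiff_subset (s := St) (t := b x)) x
    have h' := hswap x hx
    linarith
  -- Step 4: removal bound for each b x
  have h4 : ∀ x ∈ D, g St - g (St \ b x) ≤ ∑ u ∈ b x, δ u := by
    intro x hx
    have hbx : b x ⊆ St := (himg x hx).1.trans (sdiff_subset)
    exact remove_bound g hmono hsub (b x) St hbx
  -- Step 5: swap the double sum
  have h5 : ∑ x ∈ D, ∑ u ∈ b x, δ u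
      = ∑ u ∈ W, ((D.filter (fun x => u ∈ b x)).card : ℝ) * δ u := by
    have inner : ∀ x ∈ D, ∑ u ∈ b x, δ u = ∑ u ∈ W, (if u ∈ b x then δ u else 0) := by
      intro x hx
      rw [Finset.sum_ite_mem]
      congr 1
      rw [inter_eq_right.2 (himg x hx).1]
    rw [Finset.sum_congr rfl inner, Finset.sum_comm]
    apply Finset.sum_congr rfl
    intro u hu
    rw [Finset.sum_ite, Finset.sum_const_zero, add_zero, Finset.sum_const,
      nsmul_eq_mul]
  -- Step 6: bound the weighted sum
  have h6 : ∑ u ∈ W, ((D.filter (fun x => u ∈ b x)).card : ℝ) * δ u ≤ (k : ℝ) * g St := by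
    have hb1 : ∑ u ∈ W, ((D.filter (fun x => u ∈ b x)).card : ℝ) * δ u
        ≤ ∑ u ∈ W, (k : ℝ) * δ u := by
      apply Finset.sum_le_sum
      intro u hu
      have := hcount u hu
      have hcast : ((D.filter (fun x => u ∈ b x)).card : ℝ) ≤ (k : ℝ) := by
        exact_mod_cast this
      exact mul_le_mul_of_nonneg_right hcast (hδ0 u)
    have hb2 : ∑ u ∈ W, δ u ≤ ∑ u ∈ St, δ u := by
      apply Finset.sum_le_sum_of_subset_of_nonneg (sdiff_subset)
      intro u _ _
      exact hδ0 u
    have hb3 : ∑ u ∈ St, δ u = g St := telescope_g g hempty St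
    calc ∑ u ∈ W, ((D.filter (fun x => u ∈ b x)).card : ℝ) * δ u
        ≤ ∑ u ∈ W, (k : ℝ) * δ u := hb1
      _ = (k : ℝ) * ∑ u ∈ W, δ u := by rw [Finset.mul_sum]
      _ ≤ (k : ℝ) * ∑ u ∈ St, δ u := by
          apply mul_le_mul_of_nonneg_left hb2
          exact_mod_cast Nat.zero_le k
      _ = (k : ℝ) * g St := by rw [hb3]
  -- Step 7: combine
  have h7 : ∑ x ∈ D, (g (insert x St) - g St)
      ≤ ∑ x ∈ D, (c x * ρ) + ∑ x ∈ D, (g St - g (St \ b x)) := by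
    rw [← Finset.sum_add_distrib]
    exact Finset.sum_le_sum h3
  have h8 : ∑ x ∈ D, (g St - g (St \ b x)) ≤ (k : ℝ) * g St := by
    calc ∑ x ∈ D, (g St - g (St \ b x)) ≤ ∑ x ∈ D, ∑ u ∈ b x, δ u :=
          Finset.sum_le_sum h4
      _ = _ := h5
      _ ≤ (k : ℝ) * g St := h6
  have h9 : ∑ x ∈ D, (c x * ρ) ≤ C * ρ := by
    rw [← Finset.sum_mul]
    exact mul_le_mul_of_nonneg_right hsum hρ
  linarith
end

section
/- Let f be a monotone submodular function on finite U with f(∅) ≥ 0, S*, S ⊆ U, and b : S* \ S → (S \ S*) ∪ {φ} injective on preimages of real elements. If for all x ∈ S* \ S, f((S \ {b(x)}) ∪ {x}) ≤ (1 + ε/n²)·f(S), where n = |U| and ε ≥ 0, and f(S) ≥ 0, then f(S*) ≤ (2 + ε/n)·f(S). -/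
open Finset

/-- Adding a set of elements gains at most the sum of individual marginal gains. -/
lemma stmt_17_aux_add {U : Type*} [DecidableEq U] (f : Finset U → ℝ)
    (hmono : ∀ A B : Finset U, A ⊆ B → f A ≤ f B)
    (hsub : ∀ A B : Finset U, f A + f B ≥ f (A ∪ B) + f (A ∩ B))
    (S : Finset U) : ∀ T : Finset U,
      f (S ∪ T) ≤ f S + ∑ x ∈ T, (f (insert x S) - f S) := by
  intro T
  induction T using Finset.induction_on with
  | empty => simp
  | @insert a T' ha ih =>
    have h1 := hsub (insert a S) (S ∪ T')
    have hu : insert a S ∪ (S ∪ T') = S ∪ insert a T' := by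
      ext z; simp only [Finset.mem_insert, Finset.mem_union]; tauto
    have hm : f S ≤ f (insert a S ∩ (S ∪ T')) := by
      apply hmono
      intro z hz
      simp only [Finset.mem_inter, Finset.mem_insert, Finset.mem_union]
      exact ⟨Or.inr hz, Or.inl hz⟩
    rw [hu] at h1
    rw [Finset.sum_insert ha]
    linarith

/-- Approximate local optimality (used for polynomial running time): if every
swap improves `f` by at most a factor `1 + ε/n²`, then `f(S*) ≤ (2 + ε/n)·f(S)`. -/
theorem stmt_17 {U : Type*} [Fintype U] [DecidableEq U] (f : Finset U → ℝ)
    (hmono : ∀ A B : Finset U, A ⊆ B → f A ≤ f B)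
    (hsub : ∀ A B : Finset U, f A + f B ≥ f (A ∪ B) + f (A ∩ B))
    (hempty : 0 ≤ f ∅)
    (ε : ℝ) (hε : 0 ≤ ε)
    (Sstar S : Finset U) (hfS : 0 ≤ f S) (b : U → Option U)
    (himg : ∀ x ∈ Sstar \ S, ∀ y, b x = some y → y ∈ S \ Sstar)
    (hinj : ∀ y ∈ S \ Sstar, ∀ x₁ ∈ Sstar \ S, ∀ x₂ ∈ Sstar \ S,
      b x₁ = some y → b x₂ = some y → x₁ = x₂)
    (hswap : ∀ x ∈ Sstar \ S,
      f (insert x ((b x).elim S (fun y => S.erase y)))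
        ≤ (1 + ε / (Fintype.card U : ℝ) ^ 2) * f S) :
    f Sstar ≤ (2 + ε / (Fintype.card U : ℝ)) * f S := by
  classical
  set n : ℕ := Fintype.card U with hn
  set δ : ℝ := ε / (n : ℝ) ^ 2 with hδ
  have hδ0 : 0 ≤ δ := div_nonneg hε (by positivity)
  set T : Finset U := Sstar \ S with hT
  set h : U → ℝ := fun x => (b x).elim 0 (fun y => f S - f (S.erase y)) with hh
  -- per-element bound: marginal gain of x over S is at most δ f S + h x
  have hper : ∀ x ∈ T, f (insert x S) - f S ≤ δ * f S + h x := by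
    intro x hx
    have hxS : x ∉ S := (Finset.mem_sdiff.mp hx).2
    have hsw := hswap x hx
    cases hbx : b x with
    | none =>
      rw [hbx] at hsw
      simp only [Option.elim] at hsw
      have : h x = 0 := by simp [hh, hbx]
      rw [this]
      nlinarith
    | some y =>
      have hy : y ∈ S \ Sstar := himg x hx y hbx
      have hyS : y ∈ S := (Finset.mem_sdiff.mp hy).1
      rw [hbx] at hsw
      simp only [Option.elim] at hsw
      have hhx : h x = f S - f (S.erase y) := by simp [hh, hbx]
      -- submodularity: A = insert x (S.erase y), B = S
      have h1 := hsub (insert x (S.erase y)) S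
      have hu : insert x (S.erase y) ∪ S = insert x S := by
        ext z
        simp only [Finset.mem_union, Finset.mem_insert, Finset.mem_erase]
        constructor
        · rintro (h | h)
          · rcases h with h | ⟨_, h⟩
            · exact Or.inl h
            · exact Or.inr h
          · exact Or.inr h
        · rintro (h | h)
          · exact Or.inl (Or.inl h)
          · exact Or.inr h
      have hi : insert x (S.erase y) ∩ S = S.erase y := by
        ext z
        simp only [Finset.mem_inter, Finset.mem_insert, Finset.mem_erase]
        constructor
        · rintro ⟨h1', h2'⟩
          rcases h1' with rfl | h1'
          · exact absurd h2' hxS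
          · exact h1'
        · rintro ⟨hne, hz⟩
          exact ⟨Or.inr ⟨hne, hz⟩, hz⟩
      rw [hu, hi] at h1
      rw [hhx]
      linarith
  -- removal bound: sum of h over any subset of T is at most f S - f (S \ image)
  have hrem : ∀ T' : Finset U, T' ⊆ T →
      ∑ x ∈ T', h x ≤ f S - f (S \ T'.biUnion (fun x => (b x).toFinset)) := by
    intro T'
    induction T' using Finset.induction_on with
    | empty => simp
    | @insert a T'' ha ih =>
      intro hsub'
      have haT : a ∈ T := hsub' (Finset.mem_insert_self a T'')
      have hsub'' : T'' ⊆ T := fun z hz => hsub' (Finset.mem_insert_of_mem hz)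
      have ihh := ih hsub''
      set Y : Finset U := T''.biUnion (fun x => (b x).toFinset) with hY
      rw [Finset.sum_insert ha]
      cases hba : b a with
      | none =>
        have hha : h a = 0 := by simp [hh, hba]
        have hYeq : (insert a T'').biUnion (fun x => (b x).toFinset) = Y := by
          rw [Finset.biUnion_insert, hba]
          simp [hY]
        rw [hha, hYeq]
        linarith
      | some y =>
        have hy : y ∈ S \ Sstar := himg a haT y hba
        have hyS : y ∈ S := (Finset.mem_sdiff.mp hy).1
        have hha : h a = f S - f (S.erase y) := by simp [hh, hba]
        have hYeq : (insert a T'').biUnion (fun x => (b x).toFinset) = insert y Y := by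
          rw [Finset.biUnion_insert, hba]
          simp [hY, Finset.insert_eq, -Finset.singleton_union]
        have hyY : y ∉ Y := by
          intro hyY
          rw [hY, Finset.mem_biUnion] at hyY
          obtain ⟨x, hxT'', hyx⟩ := hyY
          have hbxy : b x = some y := by
            cases hbx : b x with
            | none => rw [hbx] at hyx; simp at hyx
            | some y' =>
              rw [hbx] at hyx
              simp only [Option.toFinset_some, Finset.mem_singleton] at hyx
              simp [hbx, hyx]
          have : x = a := hinj y hy x (hsub'' hxT'') a haT hbxy hba
          exact ha (this ▸ hxT'')
        -- submodularity: A = S.erase y, B = S \ Y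
        have h1 := hsub (S.erase y) (S \ Y)
        have hu : S.erase y ∪ (S \ Y) = S := by
          ext z
          simp only [Finset.mem_union, Finset.mem_erase, Finset.mem_sdiff]
          constructor
          · rintro (⟨_, hz⟩ | ⟨hz, _⟩) <;> exact hz
          · intro hz
            by_cases hzy : z = y
            · subst hzy; exact Or.inr ⟨hz, hyY⟩
            · exact Or.inl ⟨hzy, hz⟩
        have hi : S.erase y ∩ (S \ Y) = S \ insert y Y := by
          ext z
          simp only [Finset.mem_inter, Finset.mem_erase, Finset.mem_sdiff,
            Finset.mem_insert]
          constructor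
          · rintro ⟨⟨hzy, hz⟩, _, hzY⟩
            exact ⟨hz, by tauto⟩
          · rintro ⟨hz, hzn⟩
            push_neg at hzn
            exact ⟨⟨hzn.1, hz⟩, hz, hzn.2⟩
        rw [hu, hi] at h1
        rw [hha, hYeq]
        linarith
  -- assemble
  have hTS : S ∪ T = Sstar ∪ S := by
    ext z
    simp only [hT, Finset.mem_union, Finset.mem_sdiff]
    tauto
  have hadd := stmt_17_aux_add f hmono hsub S T
  rw [hTS] at hadd
  have hmono1 : f Sstar ≤ f (Sstar ∪ S) := hmono _ _ Finset.subset_union_left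
  have hsum1 : ∑ x ∈ T, (f (insert x S) - f S) ≤ ∑ x ∈ T, (δ * f S + h x) :=
    Finset.sum_le_sum hper
  rw [Finset.sum_add_distrib, Finset.sum_const, nsmul_eq_mul] at hsum1
  have hremT := hrem T (le_refl T)
  have hfpos : 0 ≤ f (S \ T.biUnion (fun x => (b x).toFinset)) :=
    le_trans hempty (hmono _ _ (Finset.empty_subset _))
  have hsumh : ∑ x ∈ T, h x ≤ f S := by linarith
  have hcard : (T.card : ℝ) ≤ (n : ℝ) := by
    exact_mod_cast le_trans (Finset.card_le_card (Finset.subset_univ T))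
      (le_of_eq (Finset.card_univ))
  have hcard0 : (0 : ℝ) ≤ (T.card : ℝ) := Nat.cast_nonneg _
  have hkey : (T.card : ℝ) * (δ * f S) ≤ ε / (n : ℝ) * f S := by
    have h2 : (T.card : ℝ) * (δ * f S) ≤ (n : ℝ) * (δ * f S) := by
      apply mul_le_mul_of_nonneg_right hcard (mul_nonneg hδ0 hfS)
    have h3 : (n : ℝ) * δ = ε / (n : ℝ) := by
      rcases Nat.eq_zero_or_pos n with h | h
      · simp [hδ, h]
      · have hn0 : (n : ℝ) ≠ 0 := Nat.cast_ne_zero.mpr (h).ne'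
        rw [hδ]; field_simp
      
    calc (T.card : ℝ) * (δ * f S) ≤ (n : ℝ) * (δ * f S) := h2
      _ = ((n : ℝ) * δ) * f S := by ring
      _ = ε / (n : ℝ) * f S := by rw [h3]
  have : f Sstar ≤ f S + ((T.card : ℝ) * (δ * f S) + f S) := by
    linarith
  linarith
end
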